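/- Suppose there is a hypergraph G in class C with maximum degree at most 2d = 2^(n-1)/n such that every full branch P of T_G contains l_P bottom units of power k_P where k_P + floor(log2(l_P)) ≥ n − log2(d) − 1. Then there exists an n-uniform hypergraph H in class C with maximum degree at most 2^(n-1)/n such that every full branch of T_H contains a hyperedge of H. -/

import Mathlib

/-- The finset of all boolean lists of length `k` (nodes on level `k` of the
complete infinite rooted binary tree). -/
def listsOfLen : ℕ → Finset (List Bool)
  | 0 => {[]}
  | k+1 => (listsOfLen k).image (· ++ [true]) ∪ (listsOfLen k).image (· ++ [false])

/-- The vertex set of the full branch (root-to-`l` path) ending at the node `l`. -/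
def prefixesF (l : List Bool) : Finset (List Bool) :=
  (Finset.range (l.length + 1)).image (fun i => l.take i)

/-- The vertex set of the level-descending path starting at node `p` and
ending at node `p ++ q`. -/
def pathFinset (p q : List Bool) : Finset (List Bool) :=
  (Finset.range (q.length + 1)).image (fun i => p ++ q.take i)

/-- `S` is (the node set of) a rooted binary tree: it contains the root, is
prefix-closed, and every node has either zero or two children. -/
def IsBinTree (S : Finset (List Bool)) : Prop :=
  [] ∈ S ∧ (∀ l ∈ S, ∀ p : List Bool, p <+: l → p ∈ S) ∧
    ∀ l ∈ S, ((l ++ [true]) ∈ S ↔ (l ++ [false]) ∈ S)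

/-- `l` is a leaf of the tree `S`. -/
def IsLeaf (S : Finset (List Bool)) (l : List Bool) : Prop :=
  l ∈ S ∧ (l ++ [true]) ∉ S ∧ (l ++ [false]) ∉ S

/-- The edge `e` is a level-descending path inside the tree `S`. -/
def InTree (S : Finset (List Bool)) (e : Finset (List Bool)) : Prop :=
  ∃ p q : List Bool, (p ++ q) ∈ S ∧ e = pathFinset p q

/-- Degree of vertex `v` in a hypergraph with hyperedge multiset `E`
(counted with multiplicity). -/
def mDegree (E : Multiset (Finset (List Bool))) (v : List Bool) : ℕ :=
  Multiset.countP (fun e => v ∈ e) E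

/-- The number (with multiplicity) of bottom hyperedges of size `L` of the full
branch ending at the leaf `l`: hyperedges contained in the branch and ending at `l`. -/
def bottomCount (E : Multiset (Finset (List Bool))) (l : List Bool) (L : ℕ) : ℕ :=
  Multiset.countP (fun e => l ∈ e ∧ e ⊆ prefixesF l ∧ e.card = L) E

/-- With `d = 2^m`, the full branch ending at leaf `l` contains bottom units of
power `k` whose multiset of lengths is `ls`: a unit of power `k` and length `L`
consists of `2^(m+1+k-L)` hyperedges of size `L` ending at `l`. -/
def HasBottomUnits (m k : ℕ) (E : Multiset (Finset (List Bool))) (l : List Bool)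
    (ls : Multiset ℕ) : Prop :=
  (∀ L ∈ ls, k ≤ L ∧ L ≤ m + 1 + k) ∧
  ∀ L : ℕ, ls.count L * 2 ^ (m + 1 + k - L) ≤ bottomCount E l L

section Aux

lemma countP_finsetSum {α ι : Type*} (s : Finset ι) (f : ι → Multiset α)
    (p : α → Prop) [DecidablePred p] :
    (∑ i ∈ s, f i).countP p = ∑ i ∈ s, (f i).countP p :=
  map_sum (Multiset.countPAddMonoidHom p) f s

lemma mem_listsOfLen {w : List Bool} {d : ℕ} : w ∈ listsOfLen d ↔ w.length = d := by
  induction d generalizing w with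
  | zero => simp [listsOfLen, List.length_eq_zero_iff]
  | succ d ih =>
    simp only [listsOfLen, Finset.mem_union, Finset.mem_image]
    constructor
    · rintro (⟨a, ha, rfl⟩ | ⟨a, ha, rfl⟩) <;> simp [ih.mp ha]
    · intro hw
      have hne : w ≠ [] := by intro h; simp [h] at hw
      have hsplit : w.dropLast ++ [w.getLast hne] = w := List.dropLast_append_getLast hne
      have hlen : w.dropLast.length = d := by
        have := (List.length_dropLast : w.dropLast.length = w.length - 1); omega
      cases hb : w.getLast hne
      · right; exact ⟨w.dropLast, ih.mpr hlen, by rw [← hb, hsplit]⟩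
      · left; exact ⟨w.dropLast, ih.mpr hlen, by rw [← hb, hsplit]⟩

lemma card_listsOfLen (d : ℕ) : (listsOfLen d).card = 2 ^ d := by
  induction d with
  | zero => simp [listsOfLen]
  | succ d ih =>
    have hinj : ∀ b : Bool, Function.Injective (fun w : List Bool => w ++ [b]) := by
      intro b x y hxy; simpa using List.append_inj_left' hxy (by simp)
    have hdisj : Disjoint ((listsOfLen d).image (· ++ [true])) ((listsOfLen d).image (· ++ [false])) := by
      rw [Finset.disjoint_left]
      rintro x hx hy
      simp only [Finset.mem_image] at hx hy
      obtain ⟨a, _, rfl⟩ := hx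
      obtain ⟨b, _, hba⟩ := hy
      have := List.append_inj_right hba (by
        have h1 : a.length = d := by
          rename_i ha _; exact mem_listsOfLen.mp ha
        have h2 : b.length = d := by
          rename_i hb; exact mem_listsOfLen.mp hb
        omega)
      simp at this
    rw [listsOfLen, Finset.card_union_of_disjoint hdisj,
      Finset.card_image_of_injective _ (hinj true), Finset.card_image_of_injective _ (hinj false), ih]
    ring

lemma listsOfLen_nonempty (d : ℕ) : (listsOfLen d).Nonempty := by
  rw [← Finset.card_pos, card_listsOfLen]; positivity

lemma exists_ext_listsOfLen {u : List Bool} {d : ℕ} (h : u.length ≤ d) :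
    ∃ w ∈ listsOfLen d, u <+: w := by
  refine ⟨u ++ List.replicate (d - u.length) true, mem_listsOfLen.mpr (by simp; omega), List.prefix_append _ _⟩

lemma mem_prefixesF {v l : List Bool} : v ∈ prefixesF l ↔ v <+: l := by
  simp only [prefixesF, Finset.mem_image, Finset.mem_range]
  constructor
  · rintro ⟨i, _, rfl⟩; exact List.take_prefix i l
  · intro h
    exact ⟨v.length, by have := h.length_le; omega, (List.prefix_iff_eq_take.mp h).symm⟩

lemma card_prefixesF (l : List Bool) : (prefixesF l).card = l.length + 1 := by
  rw [prefixesF, Finset.card_image_of_injOn, Finset.card_range]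
  intro i hi j hj hij
  simp only [Finset.coe_range, Set.mem_Iio] at hi hj
  have hi' : (l.take i).length = i := by rw [List.length_take]; omega
  have hj' : (l.take j).length = j := by rw [List.length_take]; omega
  simp only at hij
  rw [← hi', ← hj', hij]

lemma mem_pathFinset {v p q : List Bool} : v ∈ pathFinset p q ↔ p <+: v ∧ v <+: p ++ q := by
  simp only [pathFinset, Finset.mem_image, Finset.mem_range]
  constructor
  · rintro ⟨i, _, rfl⟩
    exact ⟨List.prefix_append _ _, (List.prefix_append_right_inj p).mpr (List.take_prefix i q)⟩
  · rintro ⟨⟨r, rfl⟩, h2⟩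
    have hr : r <+: q := (List.prefix_append_right_inj p).mp h2
    exact ⟨r.length, by have := hr.length_le; omega, by rw [← List.prefix_iff_eq_take.mp hr]⟩

lemma card_pathFinset (p q : List Bool) : (pathFinset p q).card = q.length + 1 := by
  rw [pathFinset, Finset.card_image_of_injOn, Finset.card_range]
  intro i hi j hj hij
  simp only [Finset.coe_range, Set.mem_Iio] at hi hj
  have hi' : (p ++ q.take i).length = p.length + i := by
    rw [List.length_append, List.length_take]; omega
  have hj' : (p ++ q.take j).length = p.length + j := by
    rw [List.length_append, List.length_take]; omega
  simp only at hij
  rw [hij, hj'] at hi'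
  omega

lemma prefix_append_cases {p l r : List Bool} (h : p <+: l ++ r) :
    p <+: l ∨ ∃ r₀, r₀ <+: r ∧ p = l ++ r₀ := by
  by_cases hl : p.length ≤ l.length
  · exact Or.inl (List.prefix_of_prefix_length_le h (List.prefix_append l r) hl)
  · right
    have hlp : l <+: p := List.prefix_of_prefix_length_le (List.prefix_append l r) h (by omega)
    obtain ⟨r₀, rfl⟩ := hlp
    exact ⟨r₀, (List.prefix_append_right_inj l).mp h, rfl⟩

lemma countP_singleton' {α : Type*} (p : α → Prop) [DecidablePred p] (a : α) :
    Multiset.countP p {a} = if p a then 1 else 0 := by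
  show Multiset.countP p (a ::ₘ 0) = _
  rw [Multiset.countP_cons, Multiset.countP_zero]
  omega

lemma sum_countP_le {α ι : Type*} (s : Finset ι) (E : Multiset α) (p : ι → α → Prop)
    [∀ i, DecidablePred (p i)] (q : α → Prop) [DecidablePred q]
    (himp : ∀ i ∈ s, ∀ e ∈ E, p i e → q e)
    (hdisj : ∀ i ∈ s, ∀ j ∈ s, ∀ e ∈ E, p i e → p j e → i = j) :
    (∑ i ∈ s, E.countP (p i)) ≤ E.countP q := by
  classical
  induction E using Multiset.induction_on with
  | empty => simp
  | cons a t ih =>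
    have ht := ih (fun i hi e he hp => himp i hi e (Multiset.mem_cons_of_mem he) hp)
      (fun i hi j hj e he => hdisj i hi j hj e (Multiset.mem_cons_of_mem he))
    simp only [Multiset.countP_cons]
    rw [Finset.sum_add_distrib]
    have hone : (∑ i ∈ s, if p i a then 1 else 0) ≤ (if q a then 1 else 0) := by
      by_cases hex : ∃ i ∈ s, p i a
      · obtain ⟨i₀, hi₀, hpi₀⟩ := hex
        have hq : q a := himp i₀ hi₀ a (Multiset.mem_cons_self a t) hpi₀
        rw [if_pos hq, ← Finset.card_filter]
        have : s.filter (fun i => p i a) = {i₀} := by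
          apply Finset.eq_singleton_iff_unique_mem.mpr
          refine ⟨Finset.mem_filter.mpr ⟨hi₀, hpi₀⟩, fun j hj => ?_⟩
          obtain ⟨hjs, hpj⟩ := Finset.mem_filter.mp hj
          exact hdisj j hjs i₀ hi₀ a (Multiset.mem_cons_self a t) hpj hpi₀
        simp [this]
      · push_neg at hex
        have : (∑ i ∈ s, if p i a then 1 else 0) = 0 :=
          Finset.sum_eq_zero (fun i hi => by simp [hex i hi])
        simp [this]
    omega

end Aux
section Build

def build (c : ℕ) : ℕ → List ℕ → Finset (List Bool)
  | 0, ll => listsOfLen (c - ll.headI)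
  | t+1, ll => ((build c t (ll.take (2^t))).image (List.cons true)) ∪
               ((build c t (ll.drop (2^t))).image (List.cons false))

lemma build_nonempty (c t : ℕ) (ll : List ℕ) : (build c t ll).Nonempty := by
  induction t generalizing ll with
  | zero => exact listsOfLen_nonempty _
  | succ t ih =>
    obtain ⟨w, hw⟩ := ih (ll.take (2^t))
    exact ⟨true :: w, by
      simp only [build, Finset.mem_union, Finset.mem_image]
      exact Or.inl ⟨w, hw, rfl⟩⟩

lemma build_mem_cases {c t : ℕ} {ll : List ℕ} {w : List Bool} (hw : w ∈ build c (t+1) ll) :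
    (∃ w₀ ∈ build c t (ll.take (2^t)), w = true :: w₀) ∨
    (∃ w₀ ∈ build c t (ll.drop (2^t)), w = false :: w₀) := by
  simp only [build, Finset.mem_union, Finset.mem_image] at hw
  rcases hw with ⟨w₀, h, rfl⟩ | ⟨w₀, h, rfl⟩
  · exact Or.inl ⟨w₀, h, rfl⟩
  · exact Or.inr ⟨w₀, h, rfl⟩

lemma build_length {c t : ℕ} {ll : List ℕ} (hlen : 2^t ≤ ll.length) {w : List Bool}
    (hw : w ∈ build c t ll) : ∃ L ∈ ll, w.length = t + (c - L) := by
  induction t generalizing ll w with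
  | zero =>
    refine ⟨ll.headI, ?_, by simpa using mem_listsOfLen.mp hw⟩
    cases ll with
    | nil => simp at hlen
    | cons a tl => simp
  | succ t ih =>
    have h1 : 2^t ≤ (ll.take (2^t)).length := by
      rw [List.length_take]; have := Nat.pow_le_pow_right (by norm_num : 1 ≤ 2) (Nat.le_succ t); omega
    have h2 : 2^t ≤ (ll.drop (2^t)).length := by
      rw [List.length_drop]; have : 2^(t+1) = 2^t + 2^t := by ring
      omega
    rcases build_mem_cases hw with ⟨w₀, hw₀, rfl⟩ | ⟨w₀, hw₀, rfl⟩
    · obtain ⟨L, hL, hlw⟩ := ih h1 hw₀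
      exact ⟨L, List.take_subset _ _ hL, by simp [hlw]; omega⟩
    · obtain ⟨L, hL, hlw⟩ := ih h2 hw₀
      exact ⟨L, List.drop_subset _ _ hL, by simp [hlw]; omega⟩

lemma build_antichain {c t : ℕ} {ll : List ℕ} {w w' : List Bool}
    (hw : w ∈ build c t ll) (hw' : w' ∈ build c t ll) (hpre : w <+: w') : w = w' := by
  induction t generalizing ll w w' with
  | zero =>
    exact hpre.eq_of_length (by rw [mem_listsOfLen.mp hw, mem_listsOfLen.mp hw'])
  | succ t ih =>
    rcases build_mem_cases hw with ⟨w₀, h₀, rfl⟩ | ⟨w₀, h₀, rfl⟩ <;>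
      rcases build_mem_cases hw' with ⟨w₁, h₁, rfl⟩ | ⟨w₁, h₁, rfl⟩ <;>
      rw [List.cons_prefix_cons] at hpre
    · rw [ih h₀ h₁ hpre.2]
    · exact absurd hpre.1 (by simp)
    · exact absurd hpre.1 (by simp)
    · rw [ih h₀ h₁ hpre.2]

lemma build_extend {c t : ℕ} {ll : List ℕ} {w r : List Bool}
    (hw : w ∈ build c t ll) (hpre : r <+: w) (hne : r ≠ w) (b : Bool) :
    ∃ w' ∈ build c t ll, r ++ [b] <+: w' := by
  induction t generalizing ll w r with
  | zero =>
    have hr : r.length < c - ll.headI := by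
      have h1 := mem_listsOfLen.mp hw
      have h2 := hpre.length_le
      rcases lt_or_eq_of_le h2 with h | h
      · omega
      · exact absurd (hpre.eq_of_length h) hne
    obtain ⟨w', hw', hp⟩ := exists_ext_listsOfLen (d := c - ll.headI)
      (by rw [List.length_append, List.length_singleton]; omega) (u := r ++ [b])
    exact ⟨w', hw', hp⟩
  | succ t ih =>
    cases r with
    | nil =>
      cases b
      · obtain ⟨w₀, hw₀⟩ := build_nonempty c t (ll.drop (2^t))
        refine ⟨false :: w₀, ?_, by simp⟩
        simp only [build, Finset.mem_union, Finset.mem_image]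
        exact Or.inr ⟨w₀, hw₀, rfl⟩
      · obtain ⟨w₀, hw₀⟩ := build_nonempty c t (ll.take (2^t))
        refine ⟨true :: w₀, ?_, by simp⟩
        simp only [build, Finset.mem_union, Finset.mem_image]
        exact Or.inl ⟨w₀, hw₀, rfl⟩
    | cons a r₀ =>
      rcases build_mem_cases hw with ⟨w₀, h₀, rfl⟩ | ⟨w₀, h₀, rfl⟩ <;>
        rw [List.cons_prefix_cons] at hpre <;>
        [(obtain ⟨rfl, hpre₀⟩ := hpre); (obtain ⟨rfl, hpre₀⟩ := hpre)]
      · have hne₀ : r₀ ≠ w₀ := fun h => hne (by rw [h])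
        obtain ⟨w', hw', hp⟩ := ih h₀ hpre₀ hne₀
        refine ⟨true :: w', ?_, ?_⟩
        · simp only [build, Finset.mem_union, Finset.mem_image]
          exact Or.inl ⟨w', hw', rfl⟩
        · rw [List.cons_append, List.cons_prefix_cons]; exact ⟨rfl, hp⟩
      · have hne₀ : r₀ ≠ w₀ := fun h => hne (by rw [h])
        obtain ⟨w', hw', hp⟩ := ih h₀ hpre₀ hne₀
        refine ⟨false :: w', ?_, ?_⟩
        · simp only [build, Finset.mem_union, Finset.mem_image]
          exact Or.inr ⟨w', hw', rfl⟩
        · rw [List.cons_append, List.cons_prefix_cons]; exact ⟨rfl, hp⟩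

lemma build_count (c : ℕ) : ∀ (t : ℕ) (ll : List ℕ) (M : ℕ), 2^t ≤ ll.length →
    ((build c t ll).filter (fun w => w.length ≤ M)).card ≤
      (ll.map (fun L => if t + (c - L) ≤ M then 2^(c-L) else 0)).sum := by
  intro t
  induction t with
  | zero =>
    intro ll M hlen
    cases ll with
    | nil => simp at hlen
    | cons L tl =>
      simp only [build, List.headI]
      by_cases hc : c - L ≤ M
      · have : (listsOfLen (c - L)).filter (fun w => w.length ≤ M) = listsOfLen (c - L) := by
          apply Finset.filter_true_of_mem
          intro w hw; rw [mem_listsOfLen.mp hw]; exact hc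
        rw [this, card_listsOfLen]
        simp only [List.map_cons, List.sum_cons, Nat.zero_add, if_pos hc]
        exact Nat.le_add_right _ _
      · have : (listsOfLen (c - L)).filter (fun w => w.length ≤ M) = ∅ := by
          apply Finset.filter_false_of_mem
          intro w hw; rw [mem_listsOfLen.mp hw]; exact hc
        simp [this]
  | succ t ih =>
    intro ll M hlen
    have h2t : 2^(t+1) = 2^t + 2^t := by ring
    have h1 : 2^t ≤ (ll.take (2^t)).length := by rw [List.length_take]; omega
    have h2 : 2^t ≤ (ll.drop (2^t)).length := by rw [List.length_drop]; omega
    have himg : ∀ (b : Bool) (s : Finset (List Bool)),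
        ((s.image (List.cons b)).filter (fun w => w.length ≤ M)).card =
          (s.filter (fun w => w.length + 1 ≤ M)).card := by
      intro b s
      rw [Finset.filter_image, Finset.card_image_of_injective _ (List.cons_injective)]
      congr 1
    rw [build]
    calc (((build c t (ll.take (2^t))).image (List.cons true) ∪
            (build c t (ll.drop (2^t))).image (List.cons false)).filter (fun w => w.length ≤ M)).card
        ≤ (((build c t (ll.take (2^t))).image (List.cons true)).filter (fun w => w.length ≤ M)).card +
          (((build c t (ll.drop (2^t))).image (List.cons false)).filter (fun w => w.length ≤ M)).card := by
          rw [Finset.filter_union]; exact Finset.card_union_le _ _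
      _ = ((build c t (ll.take (2^t))).filter (fun w => w.length + 1 ≤ M)).card +
          ((build c t (ll.drop (2^t))).filter (fun w => w.length + 1 ≤ M)).card := by
          rw [himg, himg]
      _ ≤ (ll.map (fun L => if (t+1) + (c - L) ≤ M then 2^(c-L) else 0)).sum := by
          cases M with
          | zero =>
            have e1 : ((build c t (ll.take (2^t))).filter (fun w => w.length + 1 ≤ 0)) = ∅ := by
              apply Finset.filter_false_of_mem; intro w _; omega
            have e2 : ((build c t (ll.drop (2^t))).filter (fun w => w.length + 1 ≤ 0)) = ∅ := by
              apply Finset.filter_false_of_mem; intro w _; omega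
            simp [e1, e2]
          | succ M' =>
            have hfun : ∀ w : List Bool, (w.length + 1 ≤ M' + 1) = (w.length ≤ M') := by
              intro w; simp
            have key : ∀ l' : List ℕ,
                (l'.map (fun L => if t + (c - L) ≤ M' then 2^(c-L) else 0)).sum =
                (l'.map (fun L => if (t+1) + (c - L) ≤ M' + 1 then 2^(c-L) else 0)).sum := by
              intro l'; congr 1; apply List.map_congr_left; intro L _
              congr 1; simp only [eq_iff_iff]; omega
            calc ((build c t (ll.take (2^t))).filter (fun w => w.length + 1 ≤ M' + 1)).card +
                ((build c t (ll.drop (2^t))).filter (fun w => w.length + 1 ≤ M' + 1)).card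
                ≤ ((ll.take (2^t)).map (fun L => if t + (c - L) ≤ M' then 2^(c-L) else 0)).sum +
                  ((ll.drop (2^t)).map (fun L => if t + (c - L) ≤ M' then 2^(c-L) else 0)).sum := by
                  have b1 := ih (ll.take (2^t)) M' h1
                  have b2 := ih (ll.drop (2^t)) M' h2
                  simp only [hfun] at *
                  exact Nat.add_le_add b1 b2
              _ = (ll.map (fun L => if t + (c - L) ≤ M' then 2^(c-L) else 0)).sum := by
                  rw [← List.sum_append, ← List.map_append, List.take_append_drop]
              _ = _ := key ll
end Build
/-- If there is a tree hypergraph with maximum degree at most `2d`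
(`d = 2^m = 2^(n-2)/n`, `n = 2^κ`) in which every full branch `P` contains
`l_P ≥ 1` bottom units of power `k_P` with `k_P + ⌊log₂ l_P⌋ ≥ n - log₂ d - 1`,
then there is an `n`-uniform tree hypergraph with maximum degree at most
`2^(n-1)/n` in which every full branch contains a hyperedge. -/
theorem sufficient_condition_for_maker_hypergraph (κ n m : ℕ)
    (hn : n = 2 ^ κ) (hm : m + κ + 2 = n)
    (h : ∃ (S : Finset (List Bool)) (E : Multiset (Finset (List Bool))),
      IsBinTree S ∧ (∀ e ∈ E, InTree S e) ∧
      (∀ v : List Bool, mDegree E v ≤ 2 * 2 ^ m) ∧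
      (∀ l : List Bool, IsLeaf S l → ∃ (lP kP : ℕ) (ls : Multiset ℕ),
        1 ≤ lP ∧ ls.card = lP ∧ HasBottomUnits m kP E l ls ∧
        n - m - 1 ≤ kP + Nat.log 2 lP)) :
    ∃ (S' : Finset (List Bool)) (E' : Multiset (Finset (List Bool))),
      IsBinTree S' ∧ (∀ e ∈ E', InTree S' e) ∧
      (∀ e ∈ E', e.card = n) ∧
      (∀ v : List Bool, n * mDegree E' v ≤ 2 ^ (n - 1)) ∧
      (∀ l : List Bool, IsLeaf S' l → ∃ e ∈ E', e ⊆ prefixesF l) := by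
  classical
  obtain ⟨S, E, hbin, hInT, hdeg, hlf⟩ := h
  have hch : ∀ l : List Bool, ∃ (a b : ℕ) (c : Multiset ℕ),
      IsLeaf S l → (1 ≤ a ∧ c.card = a ∧ HasBottomUnits m b E l c ∧
        n - m - 1 ≤ b + Nat.log 2 a) := by
    intro l
    by_cases hl : IsLeaf S l
    · obtain ⟨a, b, c, h1, h2, h3, h4⟩ := hlf l hl
      exact ⟨a, b, c, fun _ => ⟨h1, h2, h3, h4⟩⟩
    · exact ⟨1, 0, 0, fun hc => absurd hc hl⟩
  choose lP kP ls hprop using hch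
  set tf : List Bool → ℕ := fun l => min (Nat.log 2 (lP l)) (κ + 1 - kP l) with htf
  set cf : List Bool → ℕ := fun l => m + 1 + kP l with hcf
  set A : List Bool → Finset (List Bool) := fun l => build (cf l) (tf l) ((ls l).toList) with hA
  set Leaves : Finset (List Bool) := S.filter (fun l => IsLeaf S l) with hLv
  set NT : List Bool → Finset (List Bool) := fun l => (A l).biUnion (fun w => prefixesF w) with hNTdef
  set S' : Finset (List Bool) :=
    S ∪ Leaves.biUnion (fun l => (NT l).image (fun r => l ++ r)) with hS'def
  set edgeu : List Bool → Finset (List Bool) :=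
    fun u => pathFinset (u.take (u.length + 1 - n)) (u.drop (u.length + 1 - n)) with hedgeu
  set E' : Multiset (Finset (List Bool)) :=
    ∑ l ∈ Leaves, ∑ w ∈ A l, ({edgeu (l ++ w)} : Multiset (Finset (List Bool))) with hE'def
  -- basic facts
  have hLmem : ∀ l, l ∈ Leaves ↔ IsLeaf S l := by
    intro l
    rw [hLv, Finset.mem_filter]
    exact ⟨fun h => h.2, fun h => ⟨h.1, h⟩⟩
  have hF1 : ∀ l, IsLeaf S l → n ≤ tf l + cf l := by
    intro l hl
    obtain ⟨_, _, _, h4⟩ := hprop l hl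
    simp only [htf, hcf]
    omega
  have hFls : ∀ l, IsLeaf S l → ∀ L ∈ ls l,
      L ≤ cf l ∧ 1 ≤ L ∧ L ≤ l.length + 1 ∧
      (ls l).count L * 2 ^ (cf l - L) ≤ bottomCount E l L := by
    intro l hl L hL
    obtain ⟨_, _, h3, _⟩ := hprop l hl
    obtain ⟨hbound, hcount⟩ := h3
    have hLc : L ≤ cf l := by simp only [hcf]; exact (hbound L hL).2
    have hcnt : (ls l).count L * 2 ^ (cf l - L) ≤ bottomCount E l L := by
      simp only [hcf]; exact hcount L
    have hpos : 0 < bottomCount E l L := by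
      refine lt_of_lt_of_le ?_ hcnt
      have h1 : 1 ≤ (ls l).count L := Multiset.one_le_count_iff_mem.mpr hL
      have h2 : 0 < 2 ^ (cf l - L) := Nat.pow_pos (by norm_num)
      exact Nat.mul_pos h1 h2
    rw [bottomCount] at hpos
    obtain ⟨e, he, hpe⟩ := Multiset.countP_pos.mp hpos
    obtain ⟨hle, hsub, hcard⟩ := hpe
    have hL1 : 1 ≤ L := by
      rcases Nat.eq_zero_or_pos L with h0 | h0
      · exfalso
        rw [h0, Finset.card_eq_zero] at hcard
        rw [hcard] at hle
        exact absurd hle (Finset.notMem_empty l)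
      · exact h0
    have hLl : L ≤ l.length + 1 := by
      rw [← hcard, ← card_prefixesF l]
      exact Finset.card_le_card hsub
    exact ⟨hLc, hL1, hLl, hcnt⟩
  have hlen2 : ∀ l, IsLeaf S l → 2 ^ tf l ≤ ((ls l).toList).length := by
    intro l hl
    obtain ⟨h1, h2, _, _⟩ := hprop l hl
    rw [Multiset.length_toList, h2]
    calc 2 ^ tf l ≤ 2 ^ Nat.log 2 (lP l) := by
          apply Nat.pow_le_pow_right (by norm_num)
          simp only [htf]; exact min_le_left _ _
      _ ≤ lP l := Nat.pow_log_le_self 2 (by omega)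
  have hwlen : ∀ l, IsLeaf S l → ∀ w ∈ A l, n ≤ l.length + w.length + 1 := by
    intro l hl w hw
    simp only [hA] at hw
    obtain ⟨L, hL, hlw⟩ := build_length (hlen2 l hl) hw
    have hL' : L ∈ ls l := by rwa [Multiset.mem_toList] at hL
    obtain ⟨hLc, hL1, hLl, _⟩ := hFls l hl L hL'
    have := hF1 l hl
    omega
  have hedgemem : ∀ u v', v' ∈ edgeu u ↔ (u.take (u.length + 1 - n) <+: v' ∧ v' <+: u) := by
    intro u v'
    simp only [hedgeu]
    rw [mem_pathFinset]
    constructor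
    · rintro ⟨h1, h2⟩
      rw [List.take_append_drop] at h2
      exact ⟨h1, h2⟩
    · rintro ⟨h1, h2⟩
      rw [List.take_append_drop]
      exact ⟨h1, h2⟩
  have hedgesub : ∀ u, edgeu u ⊆ prefixesF u := by
    intro u x hx
    rw [mem_prefixesF]
    exact ((hedgemem u x).mp hx).2
  -- tree structure lemmas
  have T1 : ∀ l, IsLeaf S l → ∀ u ∈ S, l <+: u → u = l := by
    rintro l hl u hu ⟨r, rfl⟩
    cases r with
    | nil => simp
    | cons b r' =>
      exfalso
      have hpre : l ++ [b] <+: l ++ b :: r' := by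
        rw [List.prefix_append_right_inj]
        exact ⟨r', rfl⟩
      have hmem := hbin.2.1 _ hu (l ++ [b]) hpre
      cases b
      · exact hl.2.2 hmem
      · exact hl.2.1 hmem
  have T2 : ∀ l l', IsLeaf S l → IsLeaf S l' → l <+: l' → l = l' :=
    fun l l' hl hl' hp => (T1 l hl l' hl'.1 hp).symm
  have hmemS' : ∀ u, u ∈ S' ↔ (u ∈ S ∨ ∃ l ∈ Leaves, ∃ r ∈ NT l, u = l ++ r) := by
    intro u
    rw [hS'def, Finset.mem_union, Finset.mem_biUnion]
    constructor
    · rintro (h | ⟨l, hl, h⟩)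
      · exact Or.inl h
      · obtain ⟨r, hr, hru⟩ := Finset.mem_image.mp h
        exact Or.inr ⟨l, hl, r, hr, hru.symm⟩
    · rintro (h | ⟨l, hl, r, hr, rfl⟩)
      · exact Or.inl h
      · exact Or.inr ⟨l, hl, Finset.mem_image.mpr ⟨r, hr, rfl⟩⟩
  have hNT : ∀ l r, r ∈ NT l ↔ ∃ w ∈ A l, r <+: w := by
    intro l r
    rw [hNTdef]
    simp only [Finset.mem_biUnion]
    constructor
    · rintro ⟨w, hw, hr⟩
      exact ⟨w, hw, mem_prefixesF.mp hr⟩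
    · rintro ⟨w, hw, hr⟩
      exact ⟨w, hw, mem_prefixesF.mpr hr⟩
  have hNTempty : ∀ l, [] ∈ NT l := by
    intro l
    obtain ⟨w, hw⟩ := build_nonempty (cf l) (tf l) ((ls l).toList)
    exact (hNT l []).mpr ⟨w, by simp only [hA]; exact hw, List.nil_prefix⟩
  have hchar : ∀ l ∈ Leaves, ∀ r ∈ NT l, ∀ b : Bool,
      ((l ++ r) ++ [b] ∈ S' ↔ r ++ [b] ∈ NT l) := by
    intro l hl r hr b
    have hleaf : IsLeaf S l := (hLmem l).mp hl
    constructor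
    · intro hmem
      rcases (hmemS' _).mp hmem with hS | ⟨l', hl', r', hr', heq⟩
      · exfalso
        have hp : l <+: (l ++ r) ++ [b] := by
          rw [List.append_assoc]; exact List.prefix_append _ _
        have heq := T1 l hleaf _ hS hp
        apply_fun List.length at heq
        simp at heq
      · have hleaf' : IsLeaf S l' := (hLmem l').mp hl'
        have hp1 : l <+: l' ++ r' := by
          rw [← heq, List.append_assoc]; exact List.prefix_append _ _
        have hp2 : l' <+: l' ++ r' := List.prefix_append _ _
        have hll' : l = l' := by
          rcases List.prefix_or_prefix_of_prefix hp1 hp2 with h | h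
          · exact T2 l l' hleaf hleaf' h
          · exact (T2 l' l hleaf' hleaf h).symm
        subst hll'
        rw [List.append_assoc] at heq
        have hrr : r ++ [b] = r' := List.append_cancel_left heq
        rwa [hrr]
    · intro hmem
      exact (hmemS' _).mpr (Or.inr ⟨l, hl, r ++ [b], hmem, by rw [List.append_assoc]⟩)
  have hNTfull : ∀ l ∈ Leaves, ∀ r ∈ NT l,
      (r ∈ A l ∧ ∀ b : Bool, r ++ [b] ∉ NT l) ∨ (∀ b : Bool, r ++ [b] ∈ NT l) := by
    intro l hl r hr
    obtain ⟨w, hw, hpre⟩ := (hNT l r).mp hr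
    by_cases hrw : r = w
    · left
      subst hrw
      refine ⟨hw, fun b hmem => ?_⟩
      obtain ⟨w', hw', hp'⟩ := (hNT l _).mp hmem
      have hrw' : r <+: w' := (List.prefix_append r [b]).trans hp'
      have heq : r = w' := by
        simp only [hA] at hw hw'
        exact build_antichain hw hw' hrw'
      rw [← heq] at hp'
      have := hp'.length_le
      simp at this
    · right
      intro b
      simp only [hA] at hw
      obtain ⟨w', hw', hp'⟩ := build_extend hw hpre hrw b
      exact (hNT l _).mpr ⟨w', by simp only [hA]; exact hw', hp'⟩
  have hBT : IsBinTree S' := by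
    refine ⟨(hmemS' []).mpr (Or.inl hbin.1), ?_, ?_⟩
    · intro u hu p hp
      rcases (hmemS' u).mp hu with hS | ⟨l, hl, r, hr, rfl⟩
      · exact (hmemS' p).mpr (Or.inl (hbin.2.1 u hS p hp))
      · rcases prefix_append_cases hp with h | ⟨r₀, hr₀, rfl⟩
        · have hlS : l ∈ S := ((hLmem l).mp hl).1
          exact (hmemS' p).mpr (Or.inl (hbin.2.1 l hlS p h))
        · obtain ⟨w, hw, hrw⟩ := (hNT l r).mp hr
          exact (hmemS' _).mpr (Or.inr ⟨l, hl, r₀, (hNT l r₀).mpr ⟨w, hw, hr₀.trans hrw⟩, rfl⟩)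
    · intro u hu
      have hcase : ∀ l ∈ Leaves, ∀ r ∈ NT l,
          ((l ++ r) ++ [true] ∈ S' ↔ (l ++ r) ++ [false] ∈ S') := by
        intro l hl r hr
        rw [hchar l hl r hr true, hchar l hl r hr false]
        rcases hNTfull l hl r hr with ⟨_, hnone⟩ | hall
        · exact iff_of_false (hnone true) (hnone false)
        · exact iff_of_true (hall true) (hall false)
      rcases (hmemS' u).mp hu with hS | ⟨l, hl, r, hr, rfl⟩
      · by_cases hlf' : IsLeaf S u
        · have := hcase u ((hLmem u).mpr hlf') [] (hNTempty u)
          simpa using this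
        · have hone : u ++ [true] ∈ S ∨ u ++ [false] ∈ S := by
            rw [IsLeaf] at hlf'
            push_neg at hlf'
            rcases Classical.em (u ++ [true] ∈ S) with h | h
            · exact Or.inl h
            · exact Or.inr (hlf' hS h)
          have hboth : u ++ [true] ∈ S ∧ u ++ [false] ∈ S := by
            rcases hone with h | h
            · exact ⟨h, (hbin.2.2 u hS).mp h⟩
            · exact ⟨(hbin.2.2 u hS).mpr h, h⟩
          exact iff_of_true ((hmemS' _).mpr (Or.inl hboth.1)) ((hmemS' _).mpr (Or.inl hboth.2))
      · exact hcase l hl r hr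
  -- leaves of S'
  have hleafS' : ∀ u, IsLeaf S' u → ∃ l ∈ Leaves, ∃ w, w ∈ A l ∧ u = l ++ w := by
    intro u hu
    rcases (hmemS' u).mp hu.1 with hS | ⟨l, hl, r, hr, rfl⟩
    · by_cases hlf' : IsLeaf S u
      · have huL : u ∈ Leaves := (hLmem u).mpr hlf'
        rcases hNTfull u huL [] (hNTempty u) with ⟨hA', _⟩ | hall
        · exact ⟨u, huL, [], hA', by simp⟩
        · exfalso
          have h1 : [] ++ [true] ∈ NT u := hall true
          have h2 := (hchar u huL [] (hNTempty u) true).mpr h1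
          simp only [List.append_nil] at h2
          exact hu.2.1 h2
      · have hone : u ++ [true] ∈ S ∨ u ++ [false] ∈ S := by
          rw [IsLeaf] at hlf'
          push_neg at hlf'
          rcases Classical.em (u ++ [true] ∈ S) with h | h
          · exact Or.inl h
          · exact Or.inr (hlf' hS h)
        exfalso
        rcases hone with h | h
        · exact hu.2.1 ((hmemS' _).mpr (Or.inl h))
        · exact hu.2.2 ((hmemS' _).mpr (Or.inl h))
    · rcases hNTfull l hl r hr with ⟨hA', _⟩ | hall
      · exact ⟨l, hl, r, hA', rfl⟩
      · exfalso
        exact hu.2.1 ((hchar l hl r hr true).mpr (hall true))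
  -- degree formula
  have hdegE' : ∀ v, mDegree E' v =
      ∑ l ∈ Leaves, ∑ w ∈ A l, (if v ∈ edgeu (l ++ w) then 1 else 0) := by
    intro v
    rw [mDegree, hE'def, countP_finsetSum]
    apply Finset.sum_congr rfl
    intro l _
    rw [countP_finsetSum]
    apply Finset.sum_congr rfl
    intro w _
    exact countP_singleton' _ _
  -- per-leaf total card bound
  have hcardA : ∀ l, IsLeaf S l → (A l).card ≤ 2 ^ (m + 1) := by
    intro l hl
    have hfil : A l = (A l).filter (fun w => w.length ≤ tf l + cf l) := by
      symm
      apply Finset.filter_true_of_mem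
      intro w hw
      simp only [hA] at hw
      obtain ⟨L, _, hlw⟩ := build_length (hlen2 l hl) hw
      omega
    rw [hfil]
    simp only [hA]
    refine le_trans (build_count (cf l) (tf l) ((ls l).toList) (tf l + cf l) (hlen2 l hl)) ?_
    have hmap : (((ls l).toList).map
        (fun L => if tf l + (cf l - L) ≤ tf l + cf l then 2 ^ (cf l - L) else 0)).sum =
        (((ls l).toList).map (fun L => 2 ^ (cf l - L))).sum := by
      congr 1
      apply List.map_congr_left
      intro L _
      rw [if_pos (by omega)]
    rw [hmap, Finset.sum_list_map_count]
    have hstep2 : ∑ L ∈ ((ls l).toList).toFinset, ((ls l).toList).count L • 2 ^ (cf l - L) ≤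
        ∑ L ∈ ((ls l).toList).toFinset, bottomCount E l L := by
      apply Finset.sum_le_sum
      intro L hL
      have hLls : L ∈ ls l := by
        rw [List.mem_toFinset, Multiset.mem_toList] at hL
        exact hL
      have hcount : ((ls l).toList).count L = (ls l).count L := by
        simp [← Multiset.coe_count, (ls l).coe_toList]
      rw [smul_eq_mul, hcount]
      exact (hFls l hl L hLls).2.2.2
    refine le_trans hstep2 ?_
    have hsum := sum_countP_le ((ls l).toList).toFinset E
      (fun L e => l ∈ e ∧ e ⊆ prefixesF l ∧ e.card = L) (fun e => l ∈ e)
      (fun L _ e _ hp => hp.1)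
      (fun L _ L' _ e _ hp hp' => by rw [← hp.2.2, hp'.2.2])
    refine le_trans (le_of_eq ?_) (le_trans hsum ?_)
    · apply Finset.sum_congr rfl
      intro L _
      rw [bottomCount]
    · calc Multiset.countP (fun e => l ∈ e) E = mDegree E l := by rw [mDegree]
        _ ≤ 2 * 2 ^ m := hdeg l
        _ = 2 ^ (m + 1) := by ring
  -- Case A bound
  have hstepA : ∀ v l, IsLeaf S l → v <+: l →
      (∑ w ∈ A l, if v ∈ edgeu (l ++ w) then 1 else 0) ≤
        Multiset.countP (fun e => l ∈ e ∧ e ⊆ prefixesF l ∧ (l.length - v.length) + 1 ≤ e.card) E := by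
    intro v l hl hvl
    rw [← Finset.card_filter]
    have hvlen : v.length ≤ l.length := hvl.length_le
    have hn1 : 1 ≤ n := by omega
    have htake : ∀ w : List Bool, v ∈ edgeu (l ++ w) → l.length + w.length + 1 - n ≤ v.length := by
      intro w hv
      obtain ⟨h1, _⟩ := (hedgemem _ _).mp hv
      have h2 := h1.length_le
      rw [List.length_take, List.length_append] at h2
      omega
    by_cases hfar : v.length + n ≤ l.length
    · have : (A l).filter (fun w => v ∈ edgeu (l ++ w)) = ∅ := by
        apply Finset.filter_false_of_mem
        intro w _ hv
        have := htake w hv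
        omega
      rw [this]
      simp
    · push_neg at hfar
      set M := n + v.length - (l.length + 1) with hM
      have hsub1 : (A l).filter (fun w => v ∈ edgeu (l ++ w)) ⊆
          (A l).filter (fun w => w.length ≤ M) := by
        intro w hw
        rw [Finset.mem_filter] at hw ⊢
        refine ⟨hw.1, ?_⟩
        have := htake w hw.2
        omega
      refine le_trans (Finset.card_le_card hsub1) ?_
      simp only [hA]
      refine le_trans (build_count (cf l) (tf l) ((ls l).toList) M (hlen2 l hl)) ?_
      rw [Finset.sum_list_map_count]
      have hptw : ∀ L ∈ ((ls l).toList).toFinset,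
          ((ls l).toList).count L • (if tf l + (cf l - L) ≤ M then 2 ^ (cf l - L) else 0) ≤
          (if (l.length - v.length) + 1 ≤ L then bottomCount E l L else 0) := by
        intro L hL
        have hLls : L ∈ ls l := by
          rw [List.mem_toFinset, Multiset.mem_toList] at hL
          exact hL
        obtain ⟨hLc, hL1, hLl, hcnt⟩ := hFls l hl L hLls
        have hF := hF1 l hl
        by_cases hcond : tf l + (cf l - L) ≤ M
        · rw [if_pos hcond, if_pos (by omega)]
          have hcount : ((ls l).toList).count L = (ls l).count L := by
            simp [← Multiset.coe_count, (ls l).coe_toList]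
          rw [smul_eq_mul, hcount]
          exact hcnt
        · rw [if_neg hcond]
          simp
      refine le_trans (Finset.sum_le_sum hptw) ?_
      rw [← Finset.sum_filter]
      have hsum := sum_countP_le
        (((ls l).toList).toFinset.filter (fun L => (l.length - v.length) + 1 ≤ L)) E
        (fun L e => l ∈ e ∧ e ⊆ prefixesF l ∧ e.card = L)
        (fun e => l ∈ e ∧ e ⊆ prefixesF l ∧ (l.length - v.length) + 1 ≤ e.card)
        (fun L hLf e _ hp => by
          rw [Finset.mem_filter] at hLf
          exact ⟨hp.1, hp.2.1, by rw [hp.2.2]; exact hLf.2⟩)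
        (fun L _ L' _ e _ hp hp' => by rw [← hp.2.2, hp'.2.2])
      refine le_trans (le_of_eq ?_) hsum
      apply Finset.sum_congr rfl
      intro L _
      rw [bottomCount]
  -- overall degree bound
  have hdeg' : ∀ v, mDegree E' v ≤ 2 ^ (m + 1) := by
    intro v
    rw [hdegE' v]
    have hvcomp : ∀ l w, v ∈ edgeu (l ++ w) → v <+: l ++ w :=
      fun l w hv => ((hedgemem _ _).mp hv).2
    by_cases hex : ∃ l₀ ∈ Leaves, l₀ <+: v ∧ l₀ ≠ v
    · obtain ⟨l₀, hl₀, hpre₀, hne₀⟩ := hex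
      have hleaf₀ : IsLeaf S l₀ := (hLmem l₀).mp hl₀
      have hz : ∀ l ∈ Leaves, l ≠ l₀ → (∑ w ∈ A l, if v ∈ edgeu (l ++ w) then 1 else 0) = 0 := by
        intro l hl hne
        apply Finset.sum_eq_zero
        intro w _
        rw [if_neg]
        intro hv
        have hleaf : IsLeaf S l := (hLmem l).mp hl
        have hvlw : v <+: l ++ w := hvcomp l w hv
        have hllw : l <+: l ++ w := List.prefix_append _ _
        rcases List.prefix_or_prefix_of_prefix hvlw hllw with hvl | hlv
        · exact hne (T2 l₀ l hleaf₀ hleaf (hpre₀.trans hvl)).symm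
        · rcases List.prefix_or_prefix_of_prefix hlv hpre₀ with h2 | h2
          · exact hne (T2 l l₀ hleaf hleaf₀ h2)
          · exact hne (T2 l₀ l hleaf₀ hleaf h2).symm
      rw [Finset.sum_eq_single_of_mem l₀ hl₀ hz]
      calc (∑ w ∈ A l₀, if v ∈ edgeu (l₀ ++ w) then 1 else 0) ≤ ∑ w ∈ A l₀, 1 := by
            apply Finset.sum_le_sum
            intro w _
            split <;> omega
        _ = (A l₀).card := by rw [Finset.sum_const, smul_eq_mul, mul_one]
        _ ≤ 2 ^ (m + 1) := hcardA l₀ hleaf₀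
    · push_neg at hex
      have hsubJ : Leaves.filter (fun l => v <+: l) ⊆ Leaves := Finset.filter_subset _ _
      have hzero : ∀ l ∈ Leaves, l ∉ Leaves.filter (fun l => v <+: l) →
          (∑ w ∈ A l, if v ∈ edgeu (l ++ w) then 1 else 0) = 0 := by
        intro l hl hnJ
        have hnv : ¬ v <+: l := fun hc => hnJ (Finset.mem_filter.mpr ⟨hl, hc⟩)
        apply Finset.sum_eq_zero
        intro w _
        rw [if_neg]
        intro hv
        have hvlw : v <+: l ++ w := hvcomp l w hv
        have hllw : l <+: l ++ w := List.prefix_append _ _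
        rcases List.prefix_or_prefix_of_prefix hvlw hllw with hvl | hlv
        · exact hnv hvl
        · exact hnv (hex l hl hlv ▸ List.prefix_refl v)
      rw [← Finset.sum_subset hsubJ hzero]
      have hstep : ∀ l ∈ Leaves.filter (fun l => v <+: l),
          (∑ w ∈ A l, if v ∈ edgeu (l ++ w) then 1 else 0) ≤
          Multiset.countP (fun e => l ∈ e ∧ e ⊆ prefixesF l ∧ (l.length - v.length) + 1 ≤ e.card) E := by
        intro l hl
        obtain ⟨hlL, hvl⟩ := Finset.mem_filter.mp hl
        exact hstepA v l ((hLmem l).mp hlL) hvl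
      refine le_trans (Finset.sum_le_sum hstep) ?_
      have hsum := sum_countP_le (Leaves.filter (fun l => v <+: l)) E
        (fun l e => l ∈ e ∧ e ⊆ prefixesF l ∧ (l.length - v.length) + 1 ≤ e.card)
        (fun e => v ∈ e)
        (fun l hlf e he hp => by
          obtain ⟨hlL, hvl⟩ := Finset.mem_filter.mp hlf
          obtain ⟨hle, hsub, hcard⟩ := hp
          obtain ⟨pp, qq, hpq, rfl⟩ := hInT e he
          -- l = pp ++ qq
          have hl1 : l <+: pp ++ qq := (mem_pathFinset.mp hle).2
          have hl2 : pp ++ qq <+: l := by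
            have : pp ++ qq ∈ pathFinset pp qq :=
              mem_pathFinset.mpr ⟨List.prefix_append _ _, List.prefix_refl _⟩
            exact mem_prefixesF.mp (hsub this)
          have hleq : l = pp ++ qq := hl1.eq_of_length
            (le_antisymm hl1.length_le hl2.length_le)
          have hcard2 : (pathFinset pp qq).card = qq.length + 1 := card_pathFinset pp qq
          have hlenl : l.length = pp.length + qq.length := by
            rw [hleq, List.length_append]
          have hplen : pp.length ≤ v.length := by
            rw [hcard2] at hcard
            have := hvl.length_le
            omega
          have hppv : pp <+: v := by
            refine List.prefix_of_prefix_length_le ?_ hvl hplen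
            rw [hleq]
            exact List.prefix_append _ _
          refine mem_pathFinset.mpr ⟨hppv, ?_⟩
          rw [← hleq]
          exact hvl)
        (fun l hlf l' hlf' e _ hp hp' => by
          obtain ⟨hlL, _⟩ := Finset.mem_filter.mp hlf
          obtain ⟨hlL', _⟩ := Finset.mem_filter.mp hlf'
          have h1 : l <+: l' := mem_prefixesF.mp (hp'.2.1 hp.1)
          exact T2 l l' ((hLmem l).mp hlL) ((hLmem l').mp hlL') h1)
      refine le_trans hsum ?_
      calc Multiset.countP (fun e => v ∈ e) E = mDegree E v := by
            rw [mDegree]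
        _ ≤ 2 * 2 ^ m := hdeg v
        _ = 2 ^ (m + 1) := by ring
  refine ⟨S', E', hBT, ?_, ?_, ?_, ?_⟩
  · -- InTree
    intro e he
    rw [hE'def] at he
    obtain ⟨l, hl, he2⟩ := Multiset.mem_sum.mp he
    obtain ⟨w, hw, he3⟩ := Multiset.mem_sum.mp he2
    rw [Multiset.mem_singleton] at he3
    subst he3
    have hlw : l ++ w ∈ S' := (hmemS' _).mpr
      (Or.inr ⟨l, hl, w, (hNT l w).mpr ⟨w, hw, List.prefix_refl w⟩, rfl⟩)
    refine ⟨(l ++ w).take ((l ++ w).length + 1 - n), (l ++ w).drop ((l ++ w).length + 1 - n), ?_, ?_⟩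
    · rw [List.take_append_drop]
      exact hlw
    · simp only [hedgeu]
  · -- card
    intro e he
    rw [hE'def] at he
    obtain ⟨l, hl, he2⟩ := Multiset.mem_sum.mp he
    obtain ⟨w, hw, he3⟩ := Multiset.mem_sum.mp he2
    rw [Multiset.mem_singleton] at he3
    subst he3
    have hwl := hwlen l ((hLmem l).mp hl) w hw
    simp only [hedgeu]
    rw [card_pathFinset, List.length_drop, List.length_append]
    omega
  · -- degree
    intro v
    calc n * mDegree E' v ≤ n * 2 ^ (m + 1) := Nat.mul_le_mul_left n (hdeg' v)
      _ = 2 ^ (n - 1) := by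
          rw [hn, ← pow_add]
          congr 1
          omega
  · -- coverage
    intro u hu
    obtain ⟨l, hl, w, hw, rfl⟩ := hleafS' u hu
    refine ⟨edgeu (l ++ w), ?_, hedgesub (l ++ w)⟩
    rw [hE'def]
    exact Multiset.mem_sum.mpr ⟨l, hl, Multiset.mem_sum.mpr ⟨w, hw, Multiset.mem_singleton_self _⟩⟩
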